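/- Let R be a preorder (reflexive transitive relation) on a set of roles, and define the closure of an edge-extension function E : Roles → P(S × S) by Ê(R) = transitive closure of E(R) if R is transitive, and Ê(R) = E(R) ∪ ⋃_{P ⊏ R} Ê(P) otherwise. If E satisfies (s,t) ∈ E(P) and P ⊑ R implies (s,t) ∈ E(R), then for all roles P ⊑ R, Ê(P) ⊆ Ê(R), provided the role hierarchy is acyclic above transitive roles; hence the canonical interpretation satisfies all role inclusion axioms. -/

import Mathlib

/-- The closure `Ê` of the edge extension function (transitive closure for
transitive roles, union with the closures of proper sub-roles otherwise)
preserves role subsumption: if `P ⊑ R` then `Ê(P) ⊆ Ê(R)`, provided the role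
hierarchy is an acyclic (antisymmetric, well-founded) preorder and `E` is
monotone along `⊑`. Hence the canonical interpretation satisfies all role
inclusion axioms. -/
theorem stmt_8 {Role S : Type}
    (sub : Role → Role → Prop) (isTrans : Role → Prop)
    (E hatE : Role → S → S → Prop)
    (hrefl : ∀ R, sub R R)
    (htrans : ∀ P Q R, sub P Q → sub Q R → sub P R)
    (hantisymm : ∀ P R, sub P R → sub R P → P = R)
    (hwf : WellFounded (fun P R => sub P R ∧ P ≠ R))
    (hmono : ∀ P R s t, E P s t → sub P R → E R s t)
    (hhatTrans : ∀ R, isTrans R →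
      ∀ s t, hatE R s t ↔ Relation.TransGen (E R) s t)
    (hhatNonTrans : ∀ R, ¬ isTrans R →
      ∀ s t, hatE R s t ↔ E R s t ∨ ∃ P, sub P R ∧ P ≠ R ∧ hatE P s t) :
    ∀ P R, sub P R → ∀ s t, hatE P s t → hatE R s t := by
  intro P
  induction P using WellFounded.induction hwf with
  | _ P IH =>
    intro R hPR s t h
    by_cases hPR' : P = R
    · subst hPR'; exact h
    by_cases hRt : isTrans R
    · rw [hhatTrans R hRt]
      by_cases hPt : isTrans P
      · rw [hhatTrans P hPt] at h
        exact Relation.TransGen.mono (fun a b hab => hmono P R a b hab hPR) s t h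
      · rw [hhatNonTrans P hPt] at h
        rcases h with h | ⟨Q, hQP, hQne, hQ⟩
        · exact .single (hmono P R s t h hPR)
        · have := IH Q ⟨hQP, hQne⟩ R (htrans Q P R hQP hPR) s t hQ
          rwa [hhatTrans R hRt] at this
    · rw [hhatNonTrans R hRt]
      exact Or.inr ⟨P, hPR, hPR', h⟩
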